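/- Let R be a ring and M a nonzero R-module. If for every submodule N of M every nonzero R-linear map f : N → M is injective, then M is uniform: any two nonzero submodules of M have nonzero intersection. -/

import Mathlib

/-- If every nonzero partial endomorphism of a nonzero module `M` is injective,
then `M` is uniform. -/
theorem stmt_7 {R M : Type*} [Ring R] [AddCommGroup M] [Module R M] [Nontrivial M]
    (hmono : ∀ (N : Submodule R M) (f : N →ₗ[R] M), f ≠ 0 → Function.Injective f) :
    ∀ N₁ N₂ : Submodule R M, N₁ ≠ ⊥ → N₂ ≠ ⊥ → N₁ ⊓ N₂ ≠ ⊥ := by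
  intro N₁ N₂ h1 h2 hbot
  set N : Submodule R M := N₁ ⊔ N₂ with hN
  set p : Submodule R N := N₁.comap N.subtype with hp
  set q : Submodule R N := N₂.comap N.subtype with hq
  have hpq : IsCompl p q := by
    constructor
    · rw [disjoint_iff, eq_bot_iff]
      intro x hx
      have hx' : (x : M) ∈ N₁ ⊓ N₂ := ⟨hx.1, hx.2⟩
      rw [hbot] at hx'
      have : (x : M) = 0 := hx'
      simpa [Submodule.mem_bot] using Subtype.ext this
    · rw [codisjoint_iff, eq_top_iff]
      rintro ⟨x, hx⟩ -
      obtain ⟨a, ha, b, hb, hab⟩ := Submodule.mem_sup.mp hx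
      have haN : a ∈ N := Submodule.mem_sup_left ha
      have hbN : b ∈ N := Submodule.mem_sup_right hb
      have : (⟨x, hx⟩ : N) = ⟨a, haN⟩ + ⟨b, hbN⟩ := by
        ext; simp [hab.symm]
      rw [this]
      exact Submodule.add_mem_sup (by exact ha) (by exact hb)
  set f : N →ₗ[R] M := N.subtype.comp (p.subtype.comp (p.projectionOnto q hpq)) with hf
  -- f is nonzero
  obtain ⟨a, ha, ha0⟩ := (Submodule.ne_bot_iff N₁).mp h1
  have haN : a ∈ N := Submodule.mem_sup_left ha
  have hfa : f ⟨a, haN⟩ = a := by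
    have : (⟨a, haN⟩ : N) ∈ p := ha
    simp [hf, Submodule.projectionOnto_apply_left hpq ⟨⟨a, haN⟩, this⟩]
  have hfne : f ≠ 0 := by
    intro h
    rw [h] at hfa
    exact ha0 (by simpa using hfa.symm)
  -- f is not injective
  obtain ⟨b, hb, hb0⟩ := (Submodule.ne_bot_iff N₂).mp h2
  have hbN : b ∈ N := Submodule.mem_sup_right hb
  have hfb : f ⟨b, hbN⟩ = 0 := by
    have : (⟨b, hbN⟩ : N) ∈ q := hb
    simp [hf, Submodule.projectionOnto_apply_right hpq ⟨⟨b, hbN⟩, this⟩]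
  have := hmono N f hfne
  have h0 : (⟨b, hbN⟩ : N) = 0 := this (by simp [hfb])
  exact hb0 (by simpa using congrArg Subtype.val h0)
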